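/- The Banach algebra $\mathbb{M}_\Lambda(\mathbb{C})$ of $\Lambda \times \Lambda$ complex matrices $(a_{ij})$ with $\sum_{i,j}|a_{ij}| < \infty$, for an infinite index set $\Lambda$, has no central approximate identity (a net $(e_\alpha)$ with $e_\alpha x = x e_\alpha$ for all $x$ and $e_\alpha x \to x$). Consequently it is not pseudo-contractible, although it is biprojective. -/

import Mathlib

open Filter Topology

universe u

/-- An (in general non-unital) Banach algebra structure on a complex Banach space `A`:
a continuous (bounded) bilinear associative multiplication. -/
structure BanachAlgebraStr (A : Type u) [NormedAddCommGroup A] [NormedSpace ℂ A]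
    [CompleteSpace A] : Type u where
  mul : A → A → A
  add_mul' : ∀ a b c, mul (a + b) c = mul a c + mul b c
  mul_add' : ∀ a b c, mul a (b + c) = mul a b + mul a c
  smul_mul' : ∀ (r : ℂ) (a b), mul (r • a) b = r • mul a b
  mul_smul' : ∀ (r : ℂ) (a b), mul a (r • b) = r • mul a b
  mul_assoc' : ∀ a b c, mul (mul a b) c = mul a (mul b c)
  bound : ∃ C : ℝ, ∀ a b, ‖mul a b‖ ≤ C * ‖a‖ * ‖b‖

variable {A : Type u} [NormedAddCommGroup A] [NormedSpace ℂ A] [CompleteSpace A]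

/-- A realization of the projective tensor product `A ⊗̂ A` of a Banach algebra with itself,
together with its Banach `A`-bimodule structure (`lsmul`, `rsmul`) and the
multiplication (diagonal) map `projL = π_A`. The defining properties of the projective
tensor product (projective norm bound, density of elementary tensors, and the universal
property for bounded bilinear maps) are part of the data. -/
structure TensorData (M : BanachAlgebraStr A) : Type (u + 1) where
  X : Type u
  [normedX : NormedAddCommGroup X]
  [spaceX : NormedSpace ℂ X]
  [completeX : CompleteSpace X]
  tmul : A → A → X
  tmul_add_left : ∀ a b c, tmul (a + b) c = tmul a c + tmul b c
  tmul_add_right : ∀ a b c, tmul a (b + c) = tmul a b + tmul a c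
  tmul_smul_left : ∀ (r : ℂ) (a b), tmul (r • a) b = r • tmul a b
  tmul_smul_right : ∀ (r : ℂ) (a b), tmul a (r • b) = r • tmul a b
  norm_tmul : ∀ a b, ‖tmul a b‖ ≤ ‖a‖ * ‖b‖
  dense_span : Dense (Submodule.span ℂ (Set.range fun p : A × A => tmul p.1 p.2) : Set X)
  lift : ∀ (Y : Type u) [NormedAddCommGroup Y] [NormedSpace ℂ Y] [CompleteSpace Y]
      (B : A → A → Y) (C : ℝ),
      (∀ a b c, B (a + b) c = B a c + B b c) →
      (∀ a b c, B a (b + c) = B a b + B a c) →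
      (∀ (r : ℂ) (a b), B (r • a) b = r • B a b) →
      (∀ (r : ℂ) (a b), B a (r • b) = r • B a b) →
      (∀ a b, ‖B a b‖ ≤ C * (‖a‖ * ‖b‖)) →
      ∃ L : X →L[ℂ] Y, (∀ a b, L (tmul a b) = B a b) ∧ ‖L‖ ≤ C
  lsmul : A → X →L[ℂ] X
  rsmul : A → X →L[ℂ] X
  lsmul_tmul : ∀ a b c, lsmul a (tmul b c) = tmul (M.mul a b) c
  rsmul_tmul : ∀ a b c, rsmul a (tmul b c) = tmul b (M.mul c a)
  projL : X →L[ℂ] A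
  projL_tmul : ∀ a b, projL (tmul a b) = M.mul a b

attribute [instance] TensorData.normedX TensorData.spaceX TensorData.completeX

/-- `A` is approximately biprojective: there is a net (formulated via a filter on an
index type) of continuous `A`-bimodule morphisms `ρ_i : A → A ⊗̂ A` with
`π_A ∘ ρ_i (a) → a` for every `a`. -/
def ApproxBiprojective (M : BanachAlgebraStr A) : Prop :=
  ∃ T : TensorData M, ∃ (ι : Type u) (l : Filter ι) (ρ : ι → A →L[ℂ] T.X),
    l.NeBot ∧
    (∀ i a x, ρ i (M.mul a x) = T.lsmul a (ρ i x)) ∧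
    (∀ i a x, ρ i (M.mul x a) = T.rsmul a (ρ i x)) ∧
    ∀ a : A, Tendsto (fun i => T.projL (ρ i a)) l (𝓝 a)

/-- A character on the Banach algebra `(A, M)`: a nonzero continuous multiplicative
linear functional. -/
structure IsCharacter (M : BanachAlgebraStr A) (φ : A →L[ℂ] ℂ) : Prop where
  map_mul' : ∀ a b, φ (M.mul a b) = φ a * φ b
  ne_zero : φ ≠ 0

/-- `A` has a left approximate identity: a net `(e_i)` with `e_i * a → a` for all `a`. -/
def HasLeftApproxId (M : BanachAlgebraStr A) : Prop :=
  ∃ (ι : Type u) (l : Filter ι) (e : ι → A), l.NeBot ∧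
    ∀ a : A, Tendsto (fun i => M.mul (e i) a) l (𝓝 a)

/-- `A` has a right approximate identity. -/
def HasRightApproxId (M : BanachAlgebraStr A) : Prop :=
  ∃ (ι : Type u) (l : Filter ι) (e : ι → A), l.NeBot ∧
    ∀ a : A, Tendsto (fun i => M.mul a (e i)) l (𝓝 a)

/-- `A` is pseudo-contractible: a net `(m_i)` in `A ⊗̂ A` with `a · m_i = m_i · a` for
all `a` and `π_A(m_i) a → a`. -/
def PseudoContractible {A : Type u} [NormedAddCommGroup A] [NormedSpace ℂ A]
    [CompleteSpace A] (M : BanachAlgebraStr A) : Prop :=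
  ∃ T : TensorData M, ∃ (ι : Type u) (l : Filter ι) (m : ι → T.X), l.NeBot ∧
    (∀ i a, T.lsmul a (m i) = T.rsmul a (m i)) ∧
    ∀ a : A, Tendsto (fun i => M.mul (T.projL (m i)) a) l (𝓝 a)

/-- `A` is biprojective: the multiplication map `π_A : A ⊗̂ A → A` has a continuous
`A`-bimodule right inverse. -/
def Biprojective {A : Type u} [NormedAddCommGroup A] [NormedSpace ℂ A]
    [CompleteSpace A] (M : BanachAlgebraStr A) : Prop :=
  ∃ T : TensorData M, ∃ ρ : A →L[ℂ] T.X,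
    (∀ a x, ρ (M.mul a x) = T.lsmul a (ρ x)) ∧
    (∀ a x, ρ (M.mul x a) = T.rsmul a (ρ x)) ∧
    ∀ a, T.projL (ρ a) = a

/-- The `ℓ¹`-Munn matrix algebra underlying space `𝕄_Λ(ℂ)`. -/
abbrev MatL1C (Λ : Type) : Type := lp (fun _ : Λ × Λ => ℂ) 1

section Gen
variable {A : Type u} [NormedAddCommGroup A] [NormedSpace ℂ A] [CompleteSpace A]

/-- Nonnegative bound constant for the multiplication. -/
noncomputable def BanachAlgebraStr.K (M : BanachAlgebraStr A) : ℝ :=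
  max M.bound.choose 0

lemma BanachAlgebraStr.K_nonneg (M : BanachAlgebraStr A) : 0 ≤ M.K := le_max_right _ _

lemma BanachAlgebraStr.norm_mul_le (M : BanachAlgebraStr A) (a b : A) :
    ‖M.mul a b‖ ≤ M.K * ‖a‖ * ‖b‖ := by
  refine (M.bound.choose_spec a b).trans ?_
  have : M.bound.choose ≤ M.K := le_max_left _ _
  have h1 : (0:ℝ) ≤ ‖a‖ * ‖b‖ := mul_nonneg (norm_nonneg _) (norm_nonneg _)
  calc M.bound.choose * ‖a‖ * ‖b‖ = M.bound.choose * (‖a‖ * ‖b‖) := by ring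
    _ ≤ M.K * (‖a‖ * ‖b‖) := mul_le_mul_of_nonneg_right this h1
    _ = M.K * ‖a‖ * ‖b‖ := by ring

/-- Left multiplication as a continuous linear map. -/
noncomputable def BanachAlgebraStr.mulL (M : BanachAlgebraStr A) (a : A) : A →L[ℂ] A :=
  LinearMap.mkContinuous
    { toFun := fun b => M.mul a b
      map_add' := fun b c => M.mul_add' a b c
      map_smul' := fun r b => M.mul_smul' r a b }
    (M.K * ‖a‖)
    (fun b => by simpa [mul_assoc] using M.norm_mul_le a b)

@[simp] lemma BanachAlgebraStr.mulL_apply (M : BanachAlgebraStr A) (a b : A) :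
    M.mulL a b = M.mul a b := rfl

/-- Right multiplication as a continuous linear map. -/
noncomputable def BanachAlgebraStr.mulR (M : BanachAlgebraStr A) (a : A) : A →L[ℂ] A :=
  LinearMap.mkContinuous
    { toFun := fun b => M.mul b a
      map_add' := fun b c => M.add_mul' b c a
      map_smul' := fun r b => M.smul_mul' r b a }
    (M.K * ‖a‖)
    (fun b => by
      have := M.norm_mul_le b a
      calc ‖M.mul b a‖ ≤ M.K * ‖b‖ * ‖a‖ := this
        _ = M.K * ‖a‖ * ‖b‖ := by ring)

@[simp] lemma BanachAlgebraStr.mulR_apply (M : BanachAlgebraStr A) (a b : A) :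
    M.mulR a b = M.mul b a := rfl

lemma BanachAlgebraStr.mul_zero_left (M : BanachAlgebraStr A) (b : A) : M.mul 0 b = 0 := by
  have := M.smul_mul' 0 0 b
  simpa using this

lemma TensorData.projL_lsmul {M : BanachAlgebraStr A} (T : TensorData M) (a : A) (m : T.X) :
    T.projL (T.lsmul a m) = M.mul a (T.projL m) := by
  have : T.projL.comp (T.lsmul a) = (M.mulL a).comp T.projL := by
    refine ContinuousLinearMap.ext_on T.dense_span ?_
    rintro x ⟨⟨b, c⟩, rfl⟩
    simp only [ContinuousLinearMap.comp_apply, T.lsmul_tmul, T.projL_tmul,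
      BanachAlgebraStr.mulL_apply]
    exact (M.mul_assoc' a b c)
  exact DFunLike.congr_fun this m

lemma TensorData.projL_rsmul {M : BanachAlgebraStr A} (T : TensorData M) (a : A) (m : T.X) :
    T.projL (T.rsmul a m) = M.mul (T.projL m) a := by
  have : T.projL.comp (T.rsmul a) = (M.mulR a).comp T.projL := by
    refine ContinuousLinearMap.ext_on T.dense_span ?_
    rintro x ⟨⟨b, c⟩, rfl⟩
    simp only [ContinuousLinearMap.comp_apply, T.rsmul_tmul, T.projL_tmul,
      BanachAlgebraStr.mulR_apply]
    exact (M.mul_assoc' b c a).symm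
  exact DFunLike.congr_fun this m

end Gen
section L1
set_option linter.unusedSectionVars false
variable {α : Type*} [DecidableEq α]

lemma mem1 {f : α → ℂ} (h : Summable fun i => ‖f i‖) : Memℓp f 1 := by
  apply memℓp_gen; simpa using h

lemma hasSum_norm1 (f : lp (fun _ : α => ℂ) 1) : HasSum (fun i => ‖f i‖) ‖f‖ := by
  have := lp.hasSum_norm (p := 1) (by norm_num) f
  simpa using this

lemma norm1 (f : lp (fun _ : α => ℂ) 1) : ‖f‖ = ∑' i, ‖f i‖ :=
  (hasSum_norm1 f).tsum_eq.symm

lemma summable_norm1 (f : lp (fun _ : α => ℂ) 1) : Summable fun i => ‖f i‖ :=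
  (hasSum_norm1 f).summable

lemma single1_apply (i j : α) :
    (lp.single 1 i (1:ℂ) : lp (fun _ : α => ℂ) 1) j = if j = i then 1 else 0 := by
  rw [lp.single_apply]
  by_cases h : j = i <;> simp [h]

lemma norm_single1 (i : α) : ‖(lp.single 1 i (1:ℂ) : lp (fun _ : α => ℂ) 1)‖ = 1 := by
  have := lp.norm_single (p := 1) (E := fun _ : α => ℂ) (by norm_num) i (1:ℂ)
  simpa using this

lemma single_eq_smul (i : α) (c : ℂ) :
    (lp.single 1 i c : lp (fun _ : α => ℂ) 1) = c • lp.single 1 i (1:ℂ) := by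
  rw [← lp.single_smul]; norm_num

lemma dense_span_single (s : Set (lp (fun _ : α => ℂ) 1))
    (hs : ∀ i : α, lp.single 1 i (1:ℂ) ∈ s) :
    Dense (Submodule.span ℂ s : Set (lp (fun _ : α => ℂ) 1)) := by
  intro f
  have hf : HasSum (fun i : α => lp.single 1 i (f i)) f :=
    lp.hasSum_single (by norm_num) f
  refine mem_closure_of_tendsto hf (Filter.Eventually.of_forall fun t => ?_)
  refine Submodule.sum_mem _ fun i _ => ?_
  rw [single_eq_smul]
  exact Submodule.smul_mem _ _ (Submodule.subset_span (hs i))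

end L1

section Munn
variable {Λ : Type} [DecidableEq Λ]

/-- Matrix unit. -/
noncomputable def Eu (v : Λ × Λ) : MatL1C Λ := lp.single 1 v (1:ℂ)

lemma Eu_apply (v w : Λ × Λ) : (Eu v) w = if w = v then 1 else 0 := single1_apply v w

variable (MC : BanachAlgebraStr (MatL1C Λ))
  (hMC : ∀ (f g : MatL1C Λ) (i k : Λ),
      (MC.mul f g) (i, k) = ∑' j : Λ, f (i, j) * g (j, k))

include hMC in
lemma mul_Eu_right (f : MatL1C Λ) (p q i m : Λ) :
    (MC.mul f (Eu (p, q))) (i, m) = if m = q then f (i, p) else 0 := by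
  rw [hMC]
  by_cases hm : m = q
  · subst hm
    rw [tsum_eq_single p ?_]
    · rw [Eu_apply]; simp
    · intro j hj
      rw [Eu_apply, if_neg (by simp [hj]), mul_zero]
  · rw [if_neg hm]
    convert tsum_zero with j
    rw [Eu_apply, if_neg (by simp [hm]), mul_zero]

include hMC in
lemma mul_Eu_left (f : MatL1C Λ) (p q i m : Λ) :
    (MC.mul (Eu (p, q)) f) (i, m) = if i = p then f (q, m) else 0 := by
  rw [hMC]
  by_cases hi : i = p
  · subst hi
    rw [tsum_eq_single q ?_]
    · rw [Eu_apply]; simp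
    · intro j hj
      rw [Eu_apply, if_neg (by simp [hj]), zero_mul]
  · rw [if_neg hi]
    convert tsum_zero with j
    rw [Eu_apply, if_neg (by simp [hi]), zero_mul]

include hMC in
lemma central_eq_zero [Infinite Λ] (e : MatL1C Λ)
    (h : ∀ x, MC.mul e x = MC.mul x e) : e = 0 := by
  have key : ∀ p q i m : Λ,
      (if m = q then e (i, p) else 0) = (if i = p then e (q, m) else 0) := by
    intro p q i m
    have h1 := h (Eu (p, q))
    have h2 : (MC.mul e (Eu (p, q))) (i, m) = (MC.mul (Eu (p, q)) e) (i, m) := by rw [h1]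
    rwa [mul_Eu_right MC hMC, mul_Eu_left MC hMC] at h2
  obtain ⟨q₀⟩ : Nonempty Λ := inferInstance
  -- off-diagonal entries vanish
  have offdiag : ∀ i p : Λ, i ≠ p → e (i, p) = 0 := by
    intro i p hip
    have := key p q₀ i q₀
    rw [if_pos rfl, if_neg hip] at this
    exact this
  -- diagonal is constant
  have diag : ∀ p : Λ, e (p, p) = e (q₀, q₀) := by
    intro p
    have := key p q₀ p q₀
    rw [if_pos rfl, if_pos rfl] at this
    exact this
  -- the constant must be zero by summability over an infinite set
  have hsum : Summable fun i : Λ => ‖e (i, i)‖ := by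
    have := (summable_norm1 e).comp_injective
      (i := fun i : Λ => ((i, i) : Λ × Λ)) (fun a b hab => (Prod.ext_iff.1 hab).1)
    exact this
  have hconst : Summable fun _ : Λ => ‖e (q₀, q₀)‖ := by
    convert hsum using 2 with i
    rw [diag i]
  have hz : ‖e (q₀, q₀)‖ = 0 := (summable_const_iff _).mp hconst
  have hz' : e (q₀, q₀) = 0 := by simpa using hz
  apply lp.ext
  funext v
  rcases v with ⟨i, j⟩
  by_cases hij : i = j
  · subst hij
    simp only [diag i, hz']; rfl
  · simpa using offdiag i j hij

end Munn
section Tensor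
set_option maxHeartbeats 1000000
variable {Λ : Type} [DecidableEq Λ]

/-- The concrete realization of `𝕄_Λ(ℂ) ⊗̂ 𝕄_Λ(ℂ)` as `ℓ¹((Λ×Λ) × (Λ×Λ))`. -/
abbrev XT (Λ : Type) : Type := lp (fun _ : (Λ × Λ) × (Λ × Λ) => ℂ) 1

lemma norm_Eu (v : Λ × Λ) : ‖(Eu v : MatL1C Λ)‖ = 1 := norm_single1 v

lemma Eu_smul (p : Λ × Λ) (c : ℂ) : c • (Eu p : MatL1C Λ) = lp.single 1 p c :=
  (single_eq_smul p c).symm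

lemma summable_mul_norm (f g : MatL1C Λ) :
    Summable fun r : (Λ × Λ) × (Λ × Λ) => ‖f r.1 * g r.2‖ := by
  refine Summable.of_nonneg_of_le (fun _ => norm_nonneg _)
    (fun r => (norm_mul_le _ _)) ?_
  exact (summable_norm1 f).mul_of_nonneg (summable_norm1 g)
    (fun _ => norm_nonneg _) (fun _ => norm_nonneg _)

/-- Elementary tensor in the concrete realization. -/
noncomputable def tmulX (f g : MatL1C Λ) : XT Λ :=
  ⟨fun r => f r.1 * g r.2, mem1 (summable_mul_norm f g)⟩

lemma tmulX_apply (f g : MatL1C Λ) (r : (Λ × Λ) × (Λ × Λ)) :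
    (tmulX f g) r = f r.1 * g r.2 := rfl

lemma tmulX_add_left (a b c : MatL1C Λ) : tmulX (a + b) c = tmulX a c + tmulX b c := by
  apply lp.ext; funext r
  simp [tmulX_apply, lp.coeFn_add, Pi.add_apply, add_mul]

lemma tmulX_add_right (a b c : MatL1C Λ) : tmulX a (b + c) = tmulX a b + tmulX a c := by
  apply lp.ext; funext r
  simp [tmulX_apply, lp.coeFn_add, Pi.add_apply, mul_add]

lemma tmulX_smul_left (r : ℂ) (a b : MatL1C Λ) : tmulX (r • a) b = r • tmulX a b := by
  apply lp.ext; funext w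
  simp [tmulX_apply, lp.coeFn_smul, Pi.smul_apply, smul_eq_mul, mul_assoc]

lemma tmulX_smul_right (r : ℂ) (a b : MatL1C Λ) : tmulX a (r • b) = r • tmulX a b := by
  apply lp.ext; funext w
  simp [tmulX_apply, lp.coeFn_smul, Pi.smul_apply, smul_eq_mul]; ring

lemma norm_tmulX (f g : MatL1C Λ) : ‖tmulX f g‖ = ‖f‖ * ‖g‖ := by
  have hs : Summable fun r : (Λ × Λ) × (Λ × Λ) => ‖f r.1‖ * ‖g r.2‖ :=
    (summable_norm1 f).mul_of_nonneg (summable_norm1 g)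
      (fun _ => norm_nonneg _) (fun _ => norm_nonneg _)
  have h1 : HasSum (fun r : (Λ × Λ) × (Λ × Λ) => ‖f r.1‖ * ‖g r.2‖) (‖f‖ * ‖g‖) :=
    (hasSum_norm1 f).mul (hasSum_norm1 g) hs
  have h2 : HasSum (fun r : (Λ × Λ) × (Λ × Λ) => ‖f r.1‖ * ‖g r.2‖) ‖tmulX f g‖ := by
    have := hasSum_norm1 (tmulX f g)
    simpa [tmulX_apply, norm_mul] using this
  exact h2.unique h1

lemma tmulX_Eu (v w : Λ × Λ) :
    tmulX (Eu v) (Eu w) = lp.single 1 ((v, w) : (Λ × Λ) × (Λ × Λ)) (1:ℂ) := by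
  apply lp.ext; funext r
  rw [tmulX_apply, Eu_apply, Eu_apply, single1_apply]
  by_cases h1 : r.1 = v <;> by_cases h2 : r.2 = w <;>
    simp [h1, h2, Prod.ext_iff]

lemma dense_span_tmulX :
    Dense (Submodule.span ℂ
      (Set.range fun p : MatL1C Λ × MatL1C Λ => tmulX p.1 p.2) : Set (XT Λ)) := by
  apply dense_span_single
  intro r
  exact ⟨(Eu r.1, Eu r.2), (tmulX_Eu r.1 r.2).trans (by rw [Prod.mk.eta])⟩

variable [Nonempty Λ]

lemma liftX (Y : Type) [NormedAddCommGroup Y] [NormedSpace ℂ Y] [CompleteSpace Y]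
    (B : MatL1C Λ → MatL1C Λ → Y) (C : ℝ)
    (hBa : ∀ a b c, B (a + b) c = B a c + B b c)
    (hBa' : ∀ a b c, B a (b + c) = B a b + B a c)
    (hBs : ∀ (r : ℂ) (a b), B (r • a) b = r • B a b)
    (hBs' : ∀ (r : ℂ) (a b), B a (r • b) = r • B a b)
    (hC : ∀ a b, ‖B a b‖ ≤ C * (‖a‖ * ‖b‖)) :
    ∃ L : XT Λ →L[ℂ] Y, (∀ a b, L (tmulX a b) = B a b) ∧ ‖L‖ ≤ C := by
  obtain ⟨q₀⟩ : Nonempty Λ := inferInstance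
  have hC0 : 0 ≤ C := by
    have := hC (Eu (q₀, q₀)) (Eu (q₀, q₀))
    rw [norm_Eu] at this
    nlinarith [norm_nonneg (B (Eu (q₀, q₀)) (Eu (q₀, q₀)))]
  set y : (Λ × Λ) × (Λ × Λ) → Y := fun r => B (Eu r.1) (Eu r.2) with hy
  have hyb : ∀ r, ‖y r‖ ≤ C := by
    intro r
    have := hC (Eu r.1) (Eu r.2)
    rwa [norm_Eu, norm_Eu, mul_one, mul_one] at this
  -- summability of the defining series
  have Sn : ∀ h : XT Λ, Summable fun r => ‖(h : ((Λ×Λ)×(Λ×Λ)) → ℂ) r • y r‖ := by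
    intro h
    refine Summable.of_nonneg_of_le (fun _ => norm_nonneg _) (fun r => ?_)
      ((summable_norm1 h).mul_right C)
    rw [norm_smul]
    exact mul_le_mul_of_nonneg_left (hyb r) (norm_nonneg _)
  have S : ∀ h : XT Λ, Summable fun r => (h : ((Λ×Λ)×(Λ×Λ)) → ℂ) r • y r :=
    fun h => (Sn h).of_norm
  set L0 : XT Λ →ₗ[ℂ] Y :=
    { toFun := fun h => ∑' r, (h : ((Λ×Λ)×(Λ×Λ)) → ℂ) r • y r
      map_add' := by
        intro h h'
        dsimp only
        rw [← Summable.tsum_add (S h) (S h')]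
        congr 1; funext r
        rw [lp.coeFn_add, Pi.add_apply, add_smul]
      map_smul' := by
        intro c h
        dsimp only [RingHom.id_apply]
        rw [← ((S h).hasSum.const_smul c).tsum_eq]
        congr 1; funext r
        rw [lp.coeFn_smul, Pi.smul_apply, smul_smul]
        rfl } with hL0
  have hbound : ∀ h : XT Λ, ‖L0 h‖ ≤ C * ‖h‖ := by
    intro h
    refine (norm_tsum_le_tsum_norm (Sn h)).trans ?_
    have hle : ∀ r, ‖(h : ((Λ×Λ)×(Λ×Λ)) → ℂ) r • y r‖ ≤ ‖(h : ((Λ×Λ)×(Λ×Λ)) → ℂ) r‖ * C := by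
      intro r
      rw [norm_smul]
      exact mul_le_mul_of_nonneg_left (hyb r) (norm_nonneg _)
    refine (Summable.tsum_le_tsum hle (Sn h) ((summable_norm1 h).mul_right C)).trans ?_
    rw [tsum_mul_right, ← norm1, mul_comm]
  refine ⟨L0.mkContinuous C hbound, ?_, LinearMap.mkContinuous_norm_le L0 hC0 hbound⟩
  intro f g
  rw [LinearMap.mkContinuous_apply]
  have key : L0 (tmulX f g) = ∑' r : (Λ×Λ)×(Λ×Λ), (f r.1 * g r.2) • y r := rfl
  -- continuous linear maps in each variable
  set Bg : MatL1C Λ →L[ℂ] Y :=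
    LinearMap.mkContinuous
      { toFun := fun a => B a g
        map_add' := fun a b => hBa a b g
        map_smul' := fun r a => hBs r a g }
      (C * ‖g‖) (fun a => by
        have := hC a g
        calc ‖B a g‖ ≤ C * (‖a‖ * ‖g‖) := this
          _ = C * ‖g‖ * ‖a‖ := by ring) with hBg
  have hf : HasSum (fun p : Λ × Λ => (f : (Λ×Λ) → ℂ) p • Eu p) f := by
    have := lp.hasSum_single (E := fun _ : Λ × Λ => ℂ) (p := 1) (by norm_num) f
    refine HasSum.congr_fun this fun p => ?_
    exact Eu_smul p _
  have step1 : B f g = ∑' p : Λ × Λ, (f : (Λ×Λ) → ℂ) p • B (Eu p) g := by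
    have h1 := (hf.mapL Bg).tsum_eq.symm
    have h2 : ∀ p : Λ × Λ, Bg ((f : (Λ×Λ) → ℂ) p • Eu p)
        = (f : (Λ×Λ) → ℂ) p • B (Eu p) g := by
      intro p
      rw [map_smul]
      rfl
    have h3 : Bg f = B f g := rfl
    rw [← h3, h1]
    exact tsum_congr h2
  have step2 : ∀ p : Λ × Λ, B (Eu p) g = ∑' q : Λ × Λ, (g : (Λ×Λ) → ℂ) q • y (p, q) := by
    intro p
    set Bf : MatL1C Λ →L[ℂ] Y :=
      LinearMap.mkContinuous
        { toFun := fun b => B (Eu p) b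
          map_add' := fun a b => hBa' (Eu p) a b
          map_smul' := fun r a => hBs' r (Eu p) a }
        (C * ‖(Eu p : MatL1C Λ)‖) (fun b => by
          have := hC (Eu p) b
          calc ‖B (Eu p) b‖ ≤ C * (‖(Eu p : MatL1C Λ)‖ * ‖b‖) := this
            _ = C * ‖(Eu p : MatL1C Λ)‖ * ‖b‖ := by ring) with hBf
    have hg : HasSum (fun q : Λ × Λ => (g : (Λ×Λ) → ℂ) q • Eu q) g := by
      have := lp.hasSum_single (E := fun _ : Λ × Λ => ℂ) (p := 1) (by norm_num) g
      refine HasSum.congr_fun this fun q => ?_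
      exact Eu_smul q _
    have h1 := (hg.mapL Bf).tsum_eq.symm
    have h2 : ∀ q : Λ × Λ, Bf ((g : (Λ×Λ) → ℂ) q • Eu q)
        = (g : (Λ×Λ) → ℂ) q • y (p, q) := by
      intro q
      rw [map_smul]
      rfl
    have h3 : Bf g = B (Eu p) g := rfl
    rw [← h3, h1]
    exact tsum_congr h2
  -- summability over the product index
  have Sfg : Summable fun r : (Λ×Λ)×(Λ×Λ) =>
      ((f : (Λ×Λ) → ℂ) r.1 * (g : (Λ×Λ) → ℂ) r.2) • y r := by
    apply Summable.of_norm
    refine Summable.of_nonneg_of_le (fun _ => norm_nonneg _) (fun r => ?_)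
      ((((summable_norm1 f).mul_of_nonneg (summable_norm1 g)
        (fun _ => norm_nonneg _) (fun _ => norm_nonneg _))).mul_right C)
    rw [norm_smul, norm_mul]
    exact mul_le_mul_of_nonneg_left (hyb r)
      (mul_nonneg (norm_nonneg _) (norm_nonneg _))
  rw [key, Summable.tsum_prod Sfg, step1]
  refine tsum_congr fun p => ?_
  have Sq : Summable fun q : Λ × Λ => (g : (Λ×Λ) → ℂ) q • y (p, q) := by
    apply Summable.of_norm
    refine Summable.of_nonneg_of_le (fun _ => norm_nonneg _) (fun q => ?_)
      ((summable_norm1 g).mul_right C)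
    rw [norm_smul]
    exact mul_le_mul_of_nonneg_left (hyb (p, q)) (norm_nonneg _)
  rw [step2 p, ← (Sq.hasSum.const_smul ((f : (Λ×Λ) → ℂ) p)).tsum_eq]
  refine tsum_congr fun q => ?_
  rw [smul_smul]

end Tensor
section Assemble
set_option maxHeartbeats 1000000
variable {Λ : Type} [DecidableEq Λ] [Nonempty Λ]
variable (MC : BanachAlgebraStr (MatL1C Λ))

lemma lsmul_ex (a : MatL1C Λ) :
    ∃ L : XT Λ →L[ℂ] XT Λ, (∀ b c, L (tmulX b c) = tmulX (MC.mul a b) c) ∧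
      ‖L‖ ≤ MC.K * ‖a‖ := by
  refine liftX (XT Λ) (fun b c => tmulX (MC.mul a b) c) (MC.K * ‖a‖)
    (fun b b' c => by rw [MC.mul_add', tmulX_add_left])
    (fun b c c' => tmulX_add_right _ _ _)
    (fun r b c => by rw [MC.mul_smul', tmulX_smul_left])
    (fun r b c => tmulX_smul_right _ _ _)
    (fun b c => ?_)
  rw [norm_tmulX]
  have h1 := MC.norm_mul_le a b
  nlinarith [norm_nonneg c, norm_nonneg b, norm_nonneg (MC.mul a b)]

lemma rsmul_ex (a : MatL1C Λ) :
    ∃ L : XT Λ →L[ℂ] XT Λ, (∀ b c, L (tmulX b c) = tmulX b (MC.mul c a)) ∧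
      ‖L‖ ≤ MC.K * ‖a‖ := by
  refine liftX (XT Λ) (fun b c => tmulX b (MC.mul c a)) (MC.K * ‖a‖)
    (fun b b' c => tmulX_add_left _ _ _)
    (fun b c c' => by rw [MC.add_mul', tmulX_add_right])
    (fun r b c => tmulX_smul_left _ _ _)
    (fun r b c => by rw [MC.smul_mul', tmulX_smul_right])
    (fun b c => ?_)
  rw [norm_tmulX]
  have h1 := MC.norm_mul_le c a
  nlinarith [norm_nonneg b, norm_nonneg c, norm_nonneg (MC.mul c a), MC.K_nonneg,
    norm_nonneg a]

lemma projL_ex :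
    ∃ L : XT Λ →L[ℂ] MatL1C Λ, (∀ b c, L (tmulX b c) = MC.mul b c) ∧ ‖L‖ ≤ MC.K := by
  refine liftX (MatL1C Λ) MC.mul MC.K MC.add_mul' MC.mul_add' MC.smul_mul' MC.mul_smul'
    (fun b c => ?_)
  have := MC.norm_mul_le b c
  nlinarith [norm_nonneg b, norm_nonneg c]

/-- The concrete tensor-product data for `𝕄_Λ(ℂ)`. -/
noncomputable def tensorDataX : TensorData MC where
  X := XT Λ
  tmul := tmulX
  tmul_add_left := tmulX_add_left
  tmul_add_right := tmulX_add_right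
  tmul_smul_left := tmulX_smul_left
  tmul_smul_right := tmulX_smul_right
  norm_tmul := fun a b => le_of_eq (norm_tmulX a b)
  dense_span := dense_span_tmulX
  lift := fun Y _ _ _ B C h1 h2 h3 h4 h5 => liftX Y B C h1 h2 h3 h4 h5
  lsmul := fun a => (lsmul_ex MC a).choose
  rsmul := fun a => (rsmul_ex MC a).choose
  lsmul_tmul := fun a b c => (lsmul_ex MC a).choose_spec.1 b c
  rsmul_tmul := fun a b c => (rsmul_ex MC a).choose_spec.1 b c
  projL := (projL_ex MC).choose
  projL_tmul := fun a b => (projL_ex MC).choose_spec.1 a b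

lemma tensorDataX_X : (tensorDataX MC).X = XT Λ := rfl
lemma tensorDataX_lsmul (a : MatL1C Λ) :
    (tensorDataX MC).lsmul a = (lsmul_ex MC a).choose := rfl
lemma tensorDataX_rsmul (a : MatL1C Λ) :
    (tensorDataX MC).rsmul a = (rsmul_ex MC a).choose := rfl
lemma tensorDataX_projL : (tensorDataX MC).projL = (projL_ex MC).choose := rfl

end Assemble

section Rho
set_option maxHeartbeats 1000000
variable {Λ : Type} [DecidableEq Λ]

/-- Underlying function of the biprojectivity right inverse. -/
def rhoFun (k : Λ) (a : MatL1C Λ) : ((Λ × Λ) × (Λ × Λ)) → ℂ :=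
  fun r => if r.1.2 = k ∧ r.2.1 = k then a (r.1.1, r.2.2) else 0

lemma rhoFun_inj (k : Λ) : Function.Injective (fun v : Λ × Λ => ((v.1, k), (k, v.2))) := by
  intro v w h
  simp only [Prod.ext_iff] at h
  exact Prod.ext h.1.1 h.2.2

lemma rhoFun_support (k : Λ) (a : MatL1C Λ) (r : (Λ × Λ) × (Λ × Λ))
    (hr : r ∉ Set.range (fun v : Λ × Λ => ((v.1, k), (k, v.2)))) :
    rhoFun k a r = 0 := by
  rw [rhoFun, if_neg]
  intro ⟨h1, h2⟩
  exact hr ⟨(r.1.1, r.2.2), by simp [Prod.ext_iff, h1, h2]⟩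

lemma rhoFun_comp (k : Λ) (a : MatL1C Λ) (v : Λ × Λ) :
    rhoFun k a ((v.1, k), (k, v.2)) = a v := by
  rw [rhoFun, if_pos ⟨rfl, rfl⟩]

lemma rhoFun_summable (k : Λ) (a : MatL1C Λ) : Summable fun r => ‖rhoFun k a r‖ := by
  rw [← Function.Injective.summable_iff (rhoFun_inj k)
    (fun r hr => by rw [rhoFun_support k a r hr, norm_zero])]
  refine Summable.congr (summable_norm1 a) fun v => ?_
  simp only [Function.comp_apply, rhoFun_comp]

lemma rhoFun_norm (k : Λ) (a : MatL1C Λ) : (∑' r, ‖rhoFun k a r‖) = ‖a‖ := by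
  have hsupp : (Function.support fun r => ‖rhoFun k a r‖) ⊆
      Set.range (fun v : Λ × Λ => ((v.1, k), (k, v.2))) := by
    intro r hr
    by_contra hmem
    exact hr (by show ‖rhoFun k a r‖ = 0; rw [rhoFun_support k a r hmem, norm_zero])
  rw [norm1, ← Function.Injective.tsum_eq (rhoFun_inj k) hsupp]
  exact (tsum_congr fun v => by simp [rhoFun_comp]).symm

/-- The biprojectivity right inverse `ρ` as a continuous linear map. -/
noncomputable def rhoL (k : Λ) : MatL1C Λ →L[ℂ] XT Λ :=
  LinearMap.mkContinuous
    { toFun := fun a => (⟨rhoFun k a, mem1 (rhoFun_summable k a)⟩ : XT Λ)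
      map_add' := by
        intro a b
        apply lp.ext; funext r
        show rhoFun k (a + b) r = rhoFun k a r + rhoFun k b r
        simp only [rhoFun, lp.coeFn_add, Pi.add_apply]
        split_ifs <;> simp
      map_smul' := by
        intro c a
        apply lp.ext; funext r
        show rhoFun k (c • a) r = c * rhoFun k a r
        simp only [rhoFun, lp.coeFn_smul, Pi.smul_apply, smul_eq_mul]
        split_ifs <;> simp }
    1
    (fun a => by
      show ‖(⟨rhoFun k a, _⟩ : XT Λ)‖ ≤ 1 * ‖a‖
      rw [one_mul, norm1, ← rhoFun_norm k a])

lemma rhoL_apply (k : Λ) (a : MatL1C Λ) (r : (Λ × Λ) × (Λ × Λ)) :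
    (rhoL k a) r = rhoFun k a r := rfl

lemma rhoL_Eu (k : Λ) (v : Λ × Λ) :
    rhoL k (Eu v) = tmulX (Eu (v.1, k)) (Eu (k, v.2)) := by
  apply lp.ext; funext r
  rcases r with ⟨⟨i, j⟩, ⟨l, m⟩⟩
  rw [rhoL_apply, rhoFun, tmulX_apply, Eu_apply, Eu_apply]
  by_cases hj : j = k <;> by_cases hl : l = k <;> by_cases hi : i = v.1 <;>
      by_cases hm : m = v.2 <;>
    simp_all [Eu_apply, Prod.ext_iff]

end Rho
section Final
set_option maxHeartbeats 1000000
variable {Λ : Type} [DecidableEq Λ] [Nonempty Λ]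
variable (MC : BanachAlgebraStr (MatL1C Λ))
  (hMC : ∀ (f g : MatL1C Λ) (i k : Λ),
      (MC.mul f g) (i, k) = ∑' j : Λ, f (i, j) * g (j, k))

lemma dense_span_Eu :
    Dense (Submodule.span ℂ (Set.range (Eu : Λ × Λ → MatL1C Λ)) : Set (MatL1C Λ)) :=
  dense_span_single _ (fun v => ⟨v, rfl⟩)

include hMC in
lemma rho_mul_Eu (k : Λ) (a : MatL1C Λ) (v : Λ × Λ) :
    rhoL k (MC.mul a (Eu v)) = tmulX (MC.mul a (Eu (v.1, k))) (Eu (k, v.2)) := by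
  obtain ⟨p, q⟩ := v
  apply lp.ext; funext r
  rcases r with ⟨⟨i, j⟩, ⟨l, m⟩⟩
  rw [rhoL_apply, rhoFun, tmulX_apply]
  show _ = (MC.mul a (Eu (p, k))) (i, j) * (Eu (k, q)) (l, m)
  rw [mul_Eu_right MC hMC, Eu_apply]
  by_cases hj : j = k <;> by_cases hl : l = k <;> by_cases hm : m = q <;>
    · subst_eqs <;> simp_all [mul_Eu_right MC hMC, Prod.ext_iff] <;> tauto

include hMC in
lemma rho_Eu_mul (k : Λ) (a : MatL1C Λ) (v : Λ × Λ) :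
    rhoL k (MC.mul (Eu v) a) = tmulX (Eu (v.1, k)) (MC.mul (Eu (k, v.2)) a) := by
  obtain ⟨p, q⟩ := v
  apply lp.ext; funext r
  rcases r with ⟨⟨i, j⟩, ⟨l, m⟩⟩
  rw [rhoL_apply, rhoFun, tmulX_apply]
  show _ = (Eu (p, k)) (i, j) * (MC.mul (Eu (k, q)) a) (l, m)
  rw [Eu_apply, mul_Eu_left MC hMC]
  by_cases hj : j = k <;> by_cases hl : l = k <;> by_cases hi : i = p <;>
    · subst_eqs <;> simp_all [mul_Eu_left MC hMC, Prod.ext_iff] <;> tauto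

include hMC in
lemma Eu_mul_Eu (k : Λ) (v : Λ × Λ) :
    MC.mul (Eu (v.1, k)) (Eu (k, v.2)) = Eu v := by
  obtain ⟨p, q⟩ := v
  apply lp.ext; funext w
  rcases w with ⟨i, m⟩
  rw [mul_Eu_left MC hMC, Eu_apply]
  by_cases hi : i = p <;> by_cases hm : m = q <;>
    simp_all [Eu_apply, Prod.ext_iff]

end Final
set_option synthInstance.maxHeartbeats 1000000 in
set_option maxHeartbeats 1000000 in
/-- For an infinite index set `Λ`, the Banach algebra `𝕄_Λ(ℂ)` (of
`Λ × Λ` complex matrices with `∑_{i,j} |a_{ij}| < ∞`, under matrix multiplication `MC`)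
has no central approximate identity; consequently it is not pseudo-contractible,
although it is biprojective. -/
theorem matL1_no_central_ai {Λ : Type} [Infinite Λ]
    (MC : BanachAlgebraStr (MatL1C Λ))
    (hMC : ∀ (f g : MatL1C Λ) (i k : Λ),
      (MC.mul f g) (i, k) = ∑' j : Λ, f (i, j) * g (j, k)) :
    (¬ ∃ (ι : Type) (l : Filter ι) (e : ι → MatL1C Λ), l.NeBot ∧
        (∀ i x, MC.mul (e i) x = MC.mul x (e i)) ∧
        ∀ x, Tendsto (fun i => MC.mul (e i) x) l (𝓝 x)) ∧
    ¬ PseudoContractible MC ∧ Biprojective MC := by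
  letI : DecidableEq Λ := Classical.decEq Λ
  have hNe : Nonempty Λ := inferInstance
  obtain ⟨k₀⟩ := hNe
  -- Part 1 : no central approximate identity
  have part1 : ¬ ∃ (ι : Type) (l : Filter ι) (e : ι → MatL1C Λ), l.NeBot ∧
      (∀ i x, MC.mul (e i) x = MC.mul x (e i)) ∧
      ∀ x, Tendsto (fun i => MC.mul (e i) x) l (𝓝 x) := by
    rintro ⟨ι, l, e, hne, hcomm, hlim⟩
    haveI := hne
    have he0 : ∀ i, e i = 0 := fun i => central_eq_zero MC hMC (e i) (hcomm i)
    have hfun : (fun i => MC.mul (e i) (Eu ((k₀, k₀) : Λ × Λ))) = fun _ => 0 := by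
      funext i
      rw [he0 i, MC.mul_zero_left]
    have hlim' := hlim (Eu ((k₀, k₀) : Λ × Λ))
    rw [hfun] at hlim'
    have hz : (Eu ((k₀, k₀) : Λ × Λ) : MatL1C Λ) = 0 :=
      tendsto_nhds_unique hlim' tendsto_const_nhds
    have := congrArg (fun z : MatL1C Λ => (z : (Λ × Λ) → ℂ) (k₀, k₀)) hz
    simp only [Eu_apply, if_pos rfl, lp.coeFn_zero, Pi.zero_apply] at this
    exact one_ne_zero this
  refine ⟨part1, ?_, ?_⟩
  -- Part 2 : not pseudo-contractible
  · rintro ⟨T, ι, l, m, hne, hcent, hlim⟩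
    apply part1
    refine ⟨ι, l, fun i => T.projL (m i), hne, ?_, hlim⟩
    intro i x
    have h := congrArg T.projL (hcent i x)
    rw [T.projL_lsmul, T.projL_rsmul] at h
    exact h.symm
  -- Part 3 : biprojective
  · refine ⟨tensorDataX MC, rhoL k₀, ?_, ?_, ?_⟩
    · -- left module map property
      intro a x
      show rhoL k₀ (MC.mul a x) = (lsmul_ex MC a).choose (rhoL k₀ x)
      have hext : ((lsmul_ex MC a).choose).comp (rhoL k₀)
          = (rhoL k₀).comp (MC.mulL a) := by
        refine ContinuousLinearMap.ext_on (dense_span_Eu (Λ := Λ)) ?_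
        rintro x ⟨v, rfl⟩
        show (lsmul_ex MC a).choose (rhoL k₀ (Eu v)) = rhoL k₀ (MC.mul a (Eu v))
        rw [rhoL_Eu, (lsmul_ex MC a).choose_spec.1, rho_mul_Eu MC hMC]
      exact (DFunLike.congr_fun hext x).symm
    · -- right module map property
      intro a x
      show rhoL k₀ (MC.mul x a) = (rsmul_ex MC a).choose (rhoL k₀ x)
      have hext : ((rsmul_ex MC a).choose).comp (rhoL k₀)
          = (rhoL k₀).comp (MC.mulR a) := by
        refine ContinuousLinearMap.ext_on (dense_span_Eu (Λ := Λ)) ?_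
        rintro x ⟨v, rfl⟩
        show (rsmul_ex MC a).choose (rhoL k₀ (Eu v)) = rhoL k₀ (MC.mul (Eu v) a)
        rw [rhoL_Eu, (rsmul_ex MC a).choose_spec.1, rho_Eu_mul MC hMC]
      exact (DFunLike.congr_fun hext x).symm
    · -- right inverse of the projection
      intro a
      show (projL_ex MC).choose (rhoL k₀ a) = a
      have hext : ((projL_ex MC).choose).comp (rhoL k₀)
          = ContinuousLinearMap.id ℂ (MatL1C Λ) := by
        refine ContinuousLinearMap.ext_on (dense_span_Eu (Λ := Λ)) ?_
        rintro x ⟨v, rfl⟩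
        show (projL_ex MC).choose (rhoL k₀ (Eu v)) = Eu v
        rw [rhoL_Eu, (projL_ex MC).choose_spec.1, Eu_mul_Eu MC hMC]
      exact DFunLike.congr_fun hext a
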